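/- Let ρ₂ = (1 + 2·ln 2)^{−1} ≈ 0.41906 and let π be a permutation of {1,…,n} drawn uniformly at random, independently of ω. Suppose the price p > 0 is such that E_{ω,π}[ Σ_{i=1}^n y_i(ω,π) ] = ρ₂. Then for every allocation rule x, E_{ω,π}[ Σ_{i=1}^n v_i(ω)(y_i(ω,π)) ] ≥ ρ₂ · E[ Σ_{i=1}^n v_i(ω)(x_i(ω)) ]; in particular the mechanism with a uniformly random ordering yields a ρ₂-approximation of the optimal expected social welfare. -/

import Mathlib

open MeasureTheory

section AuxLemmas


lemma aux_min_split {a A : ℝ} (ha : 0 ≤ a) :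
    min a (max 0 (1 - A)) = min 1 (A + a) - min 1 A := by
  rcases le_or_gt 1 A with h | h
  · rw [max_eq_left (by linarith), min_eq_right ha, min_eq_left (by linarith),
      min_eq_left h]
    ring
  · rw [max_eq_right (by linarith : (0:ℝ) ≤ 1 - A), min_eq_right h.le]
    rcases le_or_gt (A + a) 1 with h2 | h2
    · rw [min_eq_right h2, min_eq_left (by linarith)]; ring
    · rw [min_eq_left h2.le, min_eq_right (by linarith)]

lemma aux_telescope {n : ℕ} (π : Equiv.Perm (Fin n)) (c : Fin n → ℝ) (hc : ∀ j, 0 ≤ c j) :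
    ∑ i, min (c i) (max 0 (1 - ∑ j ∈ Finset.univ.filter (fun j => π j < π i), c j))
      = min 1 (∑ j, c j) := by
  classical
  set P : ℕ → ℝ := fun m => ∑ j ∈ Finset.univ.filter (fun j => (π j : ℕ) < m), c j with hP
  have hP0 : P 0 = 0 := by simp [hP]
  have hPn : P n = ∑ j, c j := by
    rw [hP]
    simp only []
    rw [Finset.filter_true_of_mem (fun j _ => (π j).isLt)]
  have hterm : ∀ i, min (c i) (max 0 (1 - ∑ j ∈ Finset.univ.filter (fun j => π j < π i), c j))
      = min 1 (P ((π i : ℕ) + 1)) - min 1 (P (π i : ℕ)) := by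
    intro i
    have hfe : Finset.univ.filter (fun j => π j < π i)
        = Finset.univ.filter (fun j => (π j : ℕ) < (π i : ℕ)) := by
      apply Finset.filter_congr
      intro k _
      exact Fin.lt_def
    have hins : Finset.univ.filter (fun j => (π j : ℕ) < (π i : ℕ) + 1)
        = insert i (Finset.univ.filter (fun j => (π j : ℕ) < (π i : ℕ))) := by
      ext k
      simp only [Finset.mem_filter, Finset.mem_univ, true_and, Finset.mem_insert,
        Nat.lt_succ_iff_lt_or_eq]
      constructor
      · rintro (h | h)
        · exact Or.inr h
        · exact Or.inl (π.injective (Fin.val_injective h))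
      · rintro (rfl | h)
        · exact Or.inr rfl
        · exact Or.inl h
    have hnotmem : i ∉ Finset.univ.filter (fun j => (π j : ℕ) < (π i : ℕ)) := by
      simp
    have hsucc : P ((π i : ℕ) + 1) = P (π i : ℕ) + c i := by
      rw [hP]
      simp only []
      rw [hins, Finset.sum_insert hnotmem]
      ring
    rw [hfe, hsucc]
    have := aux_min_split (a := c i) (A := P (π i : ℕ)) (hc i)
    rw [add_comm (P (π i : ℕ)) (c i)] at this ⊢
    exact this
  rw [Finset.sum_congr rfl (fun i _ => hterm i)]
  have hre : ∑ i : Fin n, (min 1 (P ((π i : ℕ) + 1)) - min 1 (P (π i : ℕ)))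
      = ∑ k : Fin n, (min 1 (P ((k : ℕ) + 1)) - min 1 (P (k : ℕ))) :=
    Equiv.sum_comp π (fun k : Fin n => min 1 (P ((k : ℕ) + 1)) - min 1 (P (k : ℕ)))
  rw [hre, Fin.sum_univ_eq_sum_range (fun m => min 1 (P (m + 1)) - min 1 (P m)) n,
    Finset.sum_range_sub (fun m => min 1 (P m)) n, hP0, hPn]
  norm_num

lemma aux_count {n : ℕ} {i j : Fin n} (hij : j ≠ i) :
    ∑ π : Equiv.Perm (Fin n), (if π j < π i then (1:ℝ) else 0)
      = (n.factorial : ℝ) / 2 := by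
  have h1 : ∑ π : Equiv.Perm (Fin n), (if π j < π i then (1:ℝ) else 0)
      = ∑ π : Equiv.Perm (Fin n), (if π i < π j then (1:ℝ) else 0) :=
    Fintype.sum_equiv (Equiv.mulRight (Equiv.swap i j)) _ _ (fun π => by
      simp [Equiv.Perm.mul_apply])
  have h2 : ∑ π : Equiv.Perm (Fin n),
      ((if π j < π i then (1:ℝ) else 0) + (if π i < π j then (1:ℝ) else 0))
        = (n.factorial : ℝ) := by
    have hone : ∀ π : Equiv.Perm (Fin n),
        ((if π j < π i then (1:ℝ) else 0) + (if π i < π j then (1:ℝ) else 0)) = 1 := by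
      intro π
      rcases lt_or_gt_of_ne (fun h => hij (π.injective h)) with h | h
      · rw [if_pos h, if_neg (asymm h)]; ring
      · rw [if_neg (asymm h), if_pos h]; ring
    rw [Finset.sum_congr rfl (fun π _ => hone π)]
    simp [Finset.card_univ, Fintype.card_perm, Fintype.card_fin]
  rw [Finset.sum_add_distrib, ← h1] at h2
  linarith

lemma aux_core {n : ℕ} (c : Fin n → ℝ) (i : Fin n) (hc : ∀ j, 0 ≤ c j) (hci : c i ≤ 1) :
    1 - 2 * Real.log 2 * min 1 (∑ j ∈ Finset.univ.erase i, c j)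
      ≤ ((n.factorial : ℝ))⁻¹ * ∑ π : Equiv.Perm (Fin n),
          (if c i = 0 then (1:ℝ) else
            min 1 (max 0 (1 - ∑ j ∈ Finset.univ.filter (fun j => π j < π i), c j) / c i)) := by
  classical
  have hl : (0.6931471803 : ℝ) < Real.log 2 := Real.log_two_gt_d9
  set l := Real.log 2 with hldef
  have hfact : (0:ℝ) < (n.factorial : ℝ) := by exact_mod_cast n.factorial_pos
  have hcard : (Finset.univ : Finset (Equiv.Perm (Fin n))).card = n.factorial := by
    simp [Finset.card_univ, Fintype.card_perm, Fintype.card_fin]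
  set T := ∑ j ∈ Finset.univ.erase i, c j with hT
  have hT0 : 0 ≤ T := Finset.sum_nonneg fun j _ => hc j
  set s : Equiv.Perm (Fin n) → ℝ :=
    fun π => ∑ j ∈ Finset.univ.filter (fun j => π j < π i), c j with hs
  have hs0 : ∀ π, 0 ≤ s π := fun π => Finset.sum_nonneg fun j _ => hc j
  have hsT : ∀ π, s π ≤ T := by
    intro π
    apply Finset.sum_le_sum_of_subset_of_nonneg
    · intro k hk
      rw [Finset.mem_filter] at hk
      rw [Finset.mem_erase]
      refine ⟨?_, Finset.mem_univ k⟩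
      rintro rfl
      exact lt_irrefl _ hk.2
    · exact fun j _ _ => hc j
  have hmin0 : 0 ≤ min 1 T := le_min (by norm_num) hT0
  have hSavg : ∑ π : Equiv.Perm (Fin n), s π = (n.factorial : ℝ) / 2 * T := by
    calc ∑ π : Equiv.Perm (Fin n), s π
        = ∑ π : Equiv.Perm (Fin n), ∑ j, (if π j < π i then c j else 0) := by
          refine Finset.sum_congr rfl fun π _ => ?_
          rw [hs]
          exact Finset.sum_filter _ _
      _ = ∑ j, ∑ π : Equiv.Perm (Fin n), (if π j < π i then c j else 0) :=
          Finset.sum_comm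
      _ = ∑ j, c j * ∑ π : Equiv.Perm (Fin n), (if π j < π i then (1:ℝ) else 0) := by
          refine Finset.sum_congr rfl fun j _ => ?_
          rw [Finset.mul_sum]
          refine Finset.sum_congr rfl fun π _ => ?_
          rw [mul_ite, mul_one, mul_zero]
      _ = ∑ j ∈ Finset.univ.erase i,
            (c j * ∑ π : Equiv.Perm (Fin n), (if π j < π i then (1:ℝ) else 0)) := by
          refine (Finset.sum_erase _ ?_).symm
          simp
      _ = ∑ j ∈ Finset.univ.erase i, c j * ((n.factorial : ℝ) / 2) := by
          refine Finset.sum_congr rfl fun j hj => ?_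
          rw [aux_count (Finset.mem_erase.1 hj).1]
      _ = (n.factorial : ℝ) / 2 * T := by
          rw [← Finset.sum_mul, hT, mul_comm]
  by_cases ha0 : c i = 0
  · rw [Finset.sum_congr rfl (fun π _ => if_pos ha0), Finset.sum_const, hcard,
      nsmul_eq_mul, mul_one, inv_mul_cancel₀ hfact.ne']
    nlinarith
  · have ha : 0 < c i := (hc i).lt_of_ne (Ne.symm ha0)
    rw [Finset.sum_congr rfl (fun π _ => if_neg ha0)]
    set F : Equiv.Perm (Fin n) → ℝ := fun π => min 1 (max 0 (1 - s π) / c i) with hF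
    have hF0 : ∀ π, 0 ≤ F π := fun π =>
      le_min (by norm_num) (div_nonneg (le_max_left _ _) ha.le)
    rcases le_or_gt 1 T with h1T | h1T
    · rw [min_eq_left h1T]
      have h1 : 0 ≤ ((n.factorial : ℝ))⁻¹ * ∑ π : Equiv.Perm (Fin n), F π :=
        mul_nonneg (by positivity) (Finset.sum_nonneg fun π _ => hF0 π)
      nlinarith
    · rw [min_eq_right h1T.le]
      rcases eq_or_lt_of_le hT0 with hT00 | hTpos
      · have hFeq : ∀ π : Equiv.Perm (Fin n), F π = 1 := by
          intro π
          have hse : s π = 0 := le_antisymm (hT00 ▸ hsT π) (hs0 π)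
          rw [hF]
          simp only [hse, sub_zero]
          rw [max_eq_right (by norm_num : (0:ℝ) ≤ 1),
            min_eq_left ((le_div_iff₀ ha).2 (by linarith))]
        rw [Finset.sum_congr rfl (fun π _ => hFeq π), Finset.sum_const, hcard,
          nsmul_eq_mul, mul_one, inv_mul_cancel₀ hfact.ne']
        nlinarith
      · have hpt : ∀ π : Equiv.Perm (Fin n),
            c i * T * (1 - F π) ≤ s π * max 0 (c i - 1 + T) := by
          intro π
          have hS1 := hs0 π
          have hS2 := hsT π
          have hmaxS : max 0 (1 - s π) = 1 - s π := max_eq_right (by linarith)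
          rw [hF]
          simp only [hmaxS]
          rcases le_or_gt 1 ((1 - s π) / c i) with h | h
          · rw [min_eq_left h]
            simpa using mul_nonneg hS1 (le_max_left 0 (c i - 1 + T))
          · have h' : 1 - s π < c i := by rwa [div_lt_one ha] at h
            rw [min_eq_right h.le,
              max_eq_right (by linarith : (0:ℝ) ≤ c i - 1 + T)]
            have hexp : c i * T * (1 - (1 - s π) / c i) = T * (c i - 1 + s π) := by
              field_simp
              ring
            rw [hexp]
            have h3 : (c i - 1) * (T - s π) ≤ 0 :=
              mul_nonpos_of_nonpos_of_nonneg (by linarith) (by linarith)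
            nlinarith
        have hsum1 : ∑ π : Equiv.Perm (Fin n), (c i * T * (1 - F π))
            ≤ ∑ π : Equiv.Perm (Fin n), s π * max 0 (c i - 1 + T) :=
          Finset.sum_le_sum fun π _ => hpt π
        have hL : ∑ π : Equiv.Perm (Fin n), (c i * T * (1 - F π))
            = c i * T * ((n.factorial : ℝ) - ∑ π : Equiv.Perm (Fin n), F π) := by
          rw [← Finset.mul_sum, Finset.sum_sub_distrib, Finset.sum_const, hcard,
            nsmul_eq_mul, mul_one]
        have hR : ∑ π : Equiv.Perm (Fin n), s π * max 0 (c i - 1 + T)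
            = (n.factorial : ℝ) / 2 * T * max 0 (c i - 1 + T) := by
          rw [← Finset.sum_mul, hSavg]
        have hK : max 0 (c i - 1 + T) ≤ 4 * l * (c i * T) := by
          apply max_le
          · positivity
          · nlinarith [mul_nonneg (sub_nonneg.2 hci) (sub_nonneg.2 h1T.le),
              mul_nonneg ha.le hT0]
        have hmain : (n.factorial : ℝ) - ∑ π : Equiv.Perm (Fin n), F π
            ≤ 2 * l * (n.factorial : ℝ) * T := by
          have h2 : c i * T * ((n.factorial : ℝ) - ∑ π : Equiv.Perm (Fin n), F π)
              ≤ c i * T * (2 * l * (n.factorial : ℝ) * T) := by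
            rw [← hL]
            calc ∑ π : Equiv.Perm (Fin n), (c i * T * (1 - F π))
                ≤ (n.factorial : ℝ) / 2 * T * max 0 (c i - 1 + T) := by
                  rw [← hR]; exact hsum1
              _ ≤ (n.factorial : ℝ) / 2 * T * (4 * l * (c i * T)) := by
                  apply mul_le_mul_of_nonneg_left hK
                  positivity
              _ = c i * T * (2 * l * (n.factorial : ℝ) * T) := by ring
          exact le_of_mul_le_mul_left h2 (by positivity)
        rw [le_inv_mul_iff₀ hfact]
        nlinarith

lemma aux_fubini {n : ℕ} {Ω : Fin n → Type*} [∀ j, MeasurableSpace (Ω j)]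
    (μ : ∀ j, Measure (Ω j)) [∀ j, IsProbabilityMeasure (μ j)] (i : Fin n)
    (G : Ω i → ℝ) (H : (∀ j : {j : Fin n // ¬ j = i}, Ω j) → ℝ) :
    ∫ ω, G (ω i) * H (fun j => ω j) ∂Measure.pi μ
      = (∫ ω, G (ω i) ∂Measure.pi μ) * ∫ ω, H (fun j => ω j) ∂Measure.pi μ := by
  classical
  set κ : Measure (∀ j : {j : Fin n // j = i}, Ω j) :=
    @Measure.pi _ _ (Subtype.fintype _) _ (fun j => μ j) with hκ
  set ν : Measure (∀ j : {j : Fin n // ¬ j = i}, Ω j) :=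
    @Measure.pi _ _ (Subtype.fintype _) _ (fun j => μ j) with hν
  haveI : IsProbabilityMeasure κ := by rw [hκ]; infer_instance
  haveI : IsProbabilityMeasure ν := by rw [hν]; infer_instance
  set e := MeasurableEquiv.piEquivPiSubtypeProd Ω (fun j => j = i) with he
  have hmp := measurePreserving_piEquivPiSubtypeProd (α := Ω) μ (fun j => j = i)
  have key : ∀ φ : (∀ j, Ω j) → ℝ,
      ∫ ω, φ ω ∂Measure.pi μ = ∫ z, φ (e.symm z) ∂(κ.prod ν) := by
    intro φ
    have h2 := hmp.integral_comp e.measurableEmbedding (fun z => φ (e.symm z))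
    simp only [he, MeasurableEquiv.symm_apply_apply] at h2
    rw [hκ, hν]
    exact h2
  have hsymm1 : ∀ z : (∀ j : {j : Fin n // j = i}, Ω j) × (∀ j : {j : Fin n // ¬ j = i}, Ω j),
      (e.symm z) i = z.1 ⟨i, rfl⟩ := by
    intro z
    simp [he, MeasurableEquiv.piEquivPiSubtypeProd]
  have hsymm2 : ∀ z : (∀ j : {j : Fin n // j = i}, Ω j) × (∀ j : {j : Fin n // ¬ j = i}, Ω j),
      (fun j : {j : Fin n // ¬ j = i} => (e.symm z) (j : Fin n)) = z.2 := by
    intro z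
    funext j
    simp [he, MeasurableEquiv.piEquivPiSubtypeProd, j.2]
  have e1 : ∫ ω, G (ω i) * H (fun j => ω j) ∂Measure.pi μ
      = (∫ x, G (x ⟨i, rfl⟩) ∂κ) * ∫ y, H y ∂ν := by
    rw [key]
    have : (fun z : (∀ j : {j : Fin n // j = i}, Ω j) × (∀ j : {j : Fin n // ¬ j = i}, Ω j)
        => G ((e.symm z) i) * H (fun j => (e.symm z) j))
        = fun z => (fun x : ∀ j : {j : Fin n // j = i}, Ω j => G (x ⟨i, rfl⟩)) z.1
            * H z.2 := funext fun z => by rw [hsymm1 z, hsymm2 z]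
    rw [this]
    exact integral_prod_mul (fun x : ∀ j : {j : Fin n // j = i}, Ω j => G (x ⟨i, rfl⟩)) H
  have e2 : ∫ ω, G (ω i) ∂Measure.pi μ = ∫ x, G (x ⟨i, rfl⟩) ∂κ := by
    rw [key]
    have : (fun z : (∀ j : {j : Fin n // j = i}, Ω j) × (∀ j : {j : Fin n // ¬ j = i}, Ω j)
        => G ((e.symm z) i))
        = fun z => (fun x : ∀ j : {j : Fin n // j = i}, Ω j => G (x ⟨i, rfl⟩)) z.1
            * (fun _ : ∀ j : {j : Fin n // ¬ j = i}, Ω j => (1:ℝ)) z.2 :=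
      funext fun z => by rw [hsymm1 z]; simp
    rw [this,
      integral_prod_mul (fun x : ∀ j : {j : Fin n // j = i}, Ω j => G (x ⟨i, rfl⟩))
        (fun _ : ∀ j : {j : Fin n // ¬ j = i}, Ω j => (1:ℝ))]
    simp
  have e3 : ∫ ω, H (fun j => ω j) ∂Measure.pi μ = ∫ y, H y ∂ν := by
    rw [key]
    have : (fun z : (∀ j : {j : Fin n // j = i}, Ω j) × (∀ j : {j : Fin n // ¬ j = i}, Ω j)
        => H (fun j => (e.symm z) j))
        = fun z => (fun _ : ∀ j : {j : Fin n // j = i}, Ω j => (1:ℝ)) z.1 * H z.2 :=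
      funext fun z => by rw [hsymm2 z]; simp
    rw [this,
      integral_prod_mul (fun _ : ∀ j : {j : Fin n // j = i}, Ω j => (1:ℝ)) H]
    simp
  rw [e1, e2, e3]

end AuxLemmas

/-- Let ρ₂ = (1 + 2 ln 2)⁻¹. If the price p > 0 is such that sequential posted
pricing with a uniformly random ordering sells an expected fraction
E_{ω,π}[Σ_i y_i(ω,π)] = ρ₂ of the item (expectation over π written as the average over all
n! permutations), then E_{ω,π}[Σ_i v_i(y_i(ω,π))] ≥ ρ₂·E[Σ_i v_i(x_i)] for every allocation
rule x; in particular the mechanism is a ρ₂-approximation of the optimal social welfare. -/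
theorem stmt_2
    {n : ℕ} {Ω : Fin n → Type*} [∀ j, MeasurableSpace (Ω j)]
    (μ : ∀ j, Measure (Ω j)) [∀ j, IsProbabilityMeasure (μ j)]
    (v : ∀ j, Ω j → ℝ → ℝ) (ystar : ∀ j, Ω j → ℝ) (p : ℝ) (hp : 0 < p)
    (hval : ∀ j, ∀ᵐ ωj ∂ μ j, (∀ z ∈ Set.Icc (0:ℝ) 1, 0 ≤ v j ωj z) ∧
        MonotoneOn (v j ωj) (Set.Icc (0:ℝ) 1) ∧ ConcaveOn ℝ (Set.Icc (0:ℝ) 1) (v j ωj))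
    (hystar_meas : ∀ j, Measurable (ystar j))
    (hystar : ∀ j, ∀ᵐ ωj ∂ μ j, ystar j ωj ∈ Set.Icc (0:ℝ) 1 ∧
        ∀ z ∈ Set.Icc (0:ℝ) 1, v j ωj z - p * z ≤ v j ωj (ystar j ωj) - p * ystar j ωj)
    (S y u : Equiv.Perm (Fin n) → Fin n → (∀ j, Ω j) → ℝ)
    (hS : ∀ π i ω, S π i ω = ∑ j ∈ Finset.univ.filter (fun j => π j < π i), ystar j (ω j))
    (hy : ∀ π i ω, y π i ω = min (ystar i (ω i)) (max 0 (1 - S π i ω)))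
    (hu : ∀ π i ω, u π i ω = v i (ω i) (y π i ω) - p * y π i ω)
    (humax : ∀ π i, ∀ᵐ ω ∂ Measure.pi μ, ∀ z ∈ Set.Icc (0:ℝ) (max 0 (1 - S π i ω)),
        v i (ω i) z - p * z ≤ u π i ω)
    -- the expected fraction of the item sold, over both ω and the uniform random order,
    -- equals ρ₂ = (1 + 2 ln 2)⁻¹
    (hsold : (Nat.factorial n : ℝ)⁻¹ *
        ∑ π : Equiv.Perm (Fin n), ∫ ω, (∑ i, y π i ω) ∂(Measure.pi μ) =
      (1 + 2 * Real.log 2)⁻¹)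
    -- allocation rule
    (x : (∀ j, Ω j) → Fin n → ℝ) (hx_meas : Measurable x)
    (hx_mem : ∀ ω j, x ω j ∈ Set.Icc (0:ℝ) 1) (hx_sum : ∀ ω, ∑ j, x ω j = 1)
    -- integrability of the displayed random variables
    (hint_u : ∀ π i, Integrable (u π i) (Measure.pi μ))
    (hint_vy : ∀ π i, Integrable (fun ω => v i (ω i) (y π i ω)) (Measure.pi μ))
    (hint_y : ∀ π i, Integrable (y π i) (Measure.pi μ))
    (hint_vx : ∀ i, Integrable (fun ω => v i (ω i) (x ω i)) (Measure.pi μ))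
    (hint_x : ∀ i, Integrable (fun ω => x ω i) (Measure.pi μ)) :
    (Nat.factorial n : ℝ)⁻¹ *
        ∑ π : Equiv.Perm (Fin n), ∫ ω, (∑ i, v i (ω i) (y π i ω)) ∂(Measure.pi μ) ≥
      (1 + 2 * Real.log 2)⁻¹ * ∫ ω, (∑ i, v i (ω i) (x ω i)) ∂(Measure.pi μ) := by
  classical
  have hl : (0.6931471803 : ℝ) < Real.log 2 := Real.log_two_gt_d9
  have hρpos : (0:ℝ) < 1 + 2 * Real.log 2 := by linarith
  set ρ : ℝ := (1 + 2 * Real.log 2)⁻¹ with hρdef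
  have hρ0 : 0 ≤ ρ := by positivity
  -- n = 0 is impossible
  rcases Nat.eq_zero_or_pos n with hn0 | hn
  · exfalso
    subst hn0
    have := hx_sum (fun j => j.elim0)
    simpa using this
  have hfact : (0:ℝ) < (n.factorial : ℝ) := by exact_mod_cast n.factorial_pos
  have hcard : (Finset.univ : Finset (Equiv.Perm (Fin n))).card = n.factorial := by
    simp [Finset.card_univ, Fintype.card_perm, Fintype.card_fin]
  -- almost-everywhere coordinate facts
  have hco : ∀ᵐ ω ∂ Measure.pi μ, ∀ j,
      (ystar j (ω j) ∈ Set.Icc (0:ℝ) 1 ∧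
        ∀ z ∈ Set.Icc (0:ℝ) 1, v j (ω j) z - p * z
          ≤ v j (ω j) (ystar j (ω j)) - p * ystar j (ω j))
      ∧ ((∀ z ∈ Set.Icc (0:ℝ) 1, 0 ≤ v j (ω j) z) ∧
          MonotoneOn (v j (ω j)) (Set.Icc (0:ℝ) 1)
          ∧ ConcaveOn ℝ (Set.Icc (0:ℝ) 1) (v j (ω j))) := by
    rw [MeasureTheory.ae_all_iff]
    intro j
    exact MeasureTheory.Measure.tendsto_eval_ae_ae.eventually ((hystar j).and (hval j))
  -- abbreviations
  set G : ∀ i : Fin n, Ω i → ℝ := fun i t => v i t (ystar i t) - p * ystar i t with hG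
  set Ustar : Fin n → (∀ j, Ω j) → ℝ := fun i ω => G i (ω i) with hUstar
  set Tot : (∀ j, Ω j) → ℝ := fun ω => ∑ j, ystar j (ω j) with hTot
  set Tf : Fin n → (∀ j, Ω j) → ℝ :=
    fun i ω => ∑ j ∈ Finset.univ.erase i, ystar j (ω j) with hTf
  set F : Equiv.Perm (Fin n) → Fin n → (∀ j, Ω j) → ℝ := fun π i ω =>
    if ystar i (ω i) = 0 then 1
    else min 1 (max 0 (1 - S π i ω) / ystar i (ω i)) with hFdef
  -- measurability
  have hSmeas : ∀ π i, Measurable (S π i) := by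
    intro π i
    have : S π i = fun ω =>
        ∑ j ∈ Finset.univ.filter (fun j => π j < π i), ystar j (ω j) :=
      funext (hS π i)
    rw [this]
    exact Finset.measurable_sum _ fun j _ => (hystar_meas j).comp (measurable_pi_apply j)
  have hysmeas : ∀ i : Fin n, Measurable fun ω : ∀ j, Ω j => ystar i (ω i) :=
    fun i => (hystar_meas i).comp (measurable_pi_apply i)
  have hFmeas : ∀ π i, Measurable (F π i) := by
    intro π i
    rw [hFdef]
    apply Measurable.ite
    · exact measurableSet_eq_fun (hysmeas i) measurable_const
    · exact measurable_const
    · exact measurable_const.min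
        ((measurable_const.max (measurable_const.sub (hSmeas π i))).div (hysmeas i))
  have hTfmeas : ∀ i, Measurable (Tf i) := by
    intro i
    rw [hTf]
    exact Finset.measurable_sum _ fun j _ => (hystar_meas j).comp (measurable_pi_apply j)
  -- integrability of Ustar
  have hint_U : ∀ i, Integrable (Ustar i) (Measure.pi μ) := by
    intro i
    set π0 : Equiv.Perm (Fin n) := Equiv.swap ⟨0, hn⟩ i with hπ0
    have hae : u π0 i =ᵐ[Measure.pi μ] Ustar i := by
      filter_upwards [hco] with ω hω
      have hS0 : S π0 i ω = 0 := by
        rw [hS]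
        have : Finset.univ.filter (fun j => π0 j < π0 i) = ∅ := by
          apply Finset.filter_false_of_mem
          intro j _
          rw [hπ0, Equiv.swap_apply_right]
          intro hcon
          exact Nat.not_lt_zero _ (Fin.lt_def.1 hcon)
        rw [this, Finset.sum_empty]
      rw [hu, hy, hS0]
      simp only [sub_zero, hUstar, hG]
      rw [max_eq_right (by norm_num : (0:ℝ) ≤ 1), min_eq_left (hω i).1.1.2]
    exact (hint_u π0 i).congr hae
  have hUpos : ∀ i, ∀ᵐ ω ∂Measure.pi μ, 0 ≤ Ustar i ω := by
    intro i
    filter_upwards [hco] with ω hω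
    have h1 := (hω i).1.2 0 ⟨le_refl 0, zero_le_one⟩
    have h2 := (hω i).2.1 0 ⟨le_refl 0, zero_le_one⟩
    rw [mul_zero, sub_zero] at h1
    simp only [hUstar, hG]
    linarith
  -- the sold-quantity identity
  have hyident : ∀ π : Equiv.Perm (Fin n), ∀ᵐ ω ∂Measure.pi μ,
      ∑ i, y π i ω = min 1 (Tot ω) := by
    intro π
    filter_upwards [hco] with ω hω
    calc ∑ i, y π i ω
        = ∑ i, min (ystar i (ω i))
            (max 0 (1 - ∑ j ∈ Finset.univ.filter (fun j => π j < π i), ystar j (ω j))) :=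
          Finset.sum_congr rfl fun i _ => by rw [hy, hS]
      _ = min 1 (∑ j, ystar j (ω j)) :=
          aux_telescope π (fun j => ystar j (ω j)) (fun j => (hω j).1.1.1)
      _ = min 1 (Tot ω) := by simp only [hTot]
  have hint_minTot : Integrable (fun ω => min 1 (Tot ω)) (Measure.pi μ) :=
    (integrable_finset_sum _ (fun i _ => hint_y 1 i)).congr (hyident 1)
  have hρint : ∫ ω, min 1 (Tot ω) ∂Measure.pi μ = ρ := by
    have h := hsold
    rw [Finset.sum_congr rfl (fun π _ => integral_congr_ae (hyident π)),
      Finset.sum_const, hcard, nsmul_eq_mul, ← mul_assoc,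
      inv_mul_cancel₀ hfact.ne', one_mul] at h
    exact h
  have hint_minT : ∀ i, Integrable (fun ω => min 1 (Tf i ω)) (Measure.pi μ) := by
    intro i
    refine Integrable.mono' (integrable_const 1)
      (measurable_const.min (hTfmeas i)).aestronglyMeasurable ?_
    filter_upwards [hco] with ω hω
    have h0 : 0 ≤ Tf i ω := by
      simp only [hTf]
      exact Finset.sum_nonneg fun j _ => (hω j).1.1.1
    rw [Real.norm_eq_abs, abs_of_nonneg (le_min zero_le_one h0)]
    exact min_le_left _ _
  have hint_minTU : ∀ i,
      Integrable (fun ω => min 1 (Tf i ω) * Ustar i ω) (Measure.pi μ) := by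
    intro i
    refine Integrable.mono' (hint_U i).norm
      (((measurable_const.min (hTfmeas i)).aestronglyMeasurable).mul
        (hint_U i).aestronglyMeasurable) ?_
    filter_upwards [hco] with ω hω
    have h0 : 0 ≤ Tf i ω := by
      simp only [hTf]
      exact Finset.sum_nonneg fun j _ => (hω j).1.1.1
    rw [norm_mul]
    calc ‖min 1 (Tf i ω)‖ * ‖Ustar i ω‖ ≤ 1 * ‖Ustar i ω‖ := by
          apply mul_le_mul_of_nonneg_right _ (norm_nonneg _)
          rw [Real.norm_eq_abs, abs_of_nonneg (le_min zero_le_one h0)]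
          exact min_le_left _ _
      _ = ‖Ustar i ω‖ := one_mul _
  have hint_FU : ∀ π i,
      Integrable (fun ω => F π i ω * Ustar i ω) (Measure.pi μ) := by
    intro π i
    refine Integrable.mono' (hint_U i).norm
      (((hFmeas π i).aestronglyMeasurable).mul (hint_U i).aestronglyMeasurable) ?_
    filter_upwards [hco] with ω hω
    rw [norm_mul]
    have hF01 : 0 ≤ F π i ω ∧ F π i ω ≤ 1 := by
      simp only [hFdef]
      by_cases hz : ystar i (ω i) = 0
      · rw [if_pos hz]; norm_num
      · rw [if_neg hz]
        have ha : 0 < ystar i (ω i) := lt_of_le_of_ne (hω i).1.1.1 (Ne.symm hz)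
        exact ⟨le_min zero_le_one (div_nonneg (le_max_left _ _) ha.le), min_le_left _ _⟩
    calc ‖F π i ω‖ * ‖Ustar i ω‖ ≤ 1 * ‖Ustar i ω‖ := by
          apply mul_le_mul_of_nonneg_right _ (norm_nonneg _)
          rw [Real.norm_eq_abs, abs_of_nonneg hF01.1]
          exact hF01.2
      _ = ‖Ustar i ω‖ := one_mul _
  -- Step A : pointwise lower bound on utility
  have hA : ∀ π i, ∀ᵐ ω ∂Measure.pi μ, F π i ω * Ustar i ω ≤ u π i ω := by
    intro π i
    filter_upwards [hco, humax π i] with ω hω hmax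
    have hr0 : (0:ℝ) ≤ max 0 (1 - S π i ω) := le_max_left _ _
    have hv0 : 0 ≤ v i (ω i) 0 := (hω i).2.1 0 ⟨le_refl 0, zero_le_one⟩
    simp only [hFdef, hUstar, hG]
    by_cases hz : ystar i (ω i) = 0
    · rw [if_pos hz, one_mul, hz, mul_zero, sub_zero]
      have h1 := hmax 0 ⟨le_refl 0, hr0⟩
      rw [mul_zero, sub_zero] at h1
      exact h1
    · have ha : 0 < ystar i (ω i) := lt_of_le_of_ne (hω i).1.1.1 (Ne.symm hz)
      rw [if_neg hz]
      rcases le_or_gt (ystar i (ω i)) (max 0 (1 - S π i ω)) with hle | hlt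
      · rw [min_eq_left ((one_le_div ha).2 hle), one_mul]
        exact hmax (ystar i (ω i)) ⟨(hω i).1.1.1, hle⟩
      · have hdiv : max 0 (1 - S π i ω) / ystar i (ω i) ≤ 1 := (div_le_one ha).2 hlt.le
        rw [min_eq_right hdiv]
        set t := max 0 (1 - S π i ω) / ystar i (ω i) with htdef
        have ht0 : 0 ≤ t := div_nonneg hr0 ha.le
        have hta : t * ystar i (ω i) = max 0 (1 - S π i ω) :=
          div_mul_cancel₀ _ ha.ne'
        have hcc := (hω i).2.2.2.2 ⟨(hω i).1.1.1, (hω i).1.1.2⟩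
          (Set.mem_Icc.2 ⟨le_refl 0, zero_le_one⟩) ht0 (by linarith : 0 ≤ 1 - t)
          (by ring)
        simp only [smul_eq_mul, mul_zero, add_zero] at hcc
        rw [hta] at hcc
        have humaxr := hmax (max 0 (1 - S π i ω)) ⟨hr0, le_refl _⟩
        have h1m : 0 ≤ (1 - t) * v i (ω i) 0 := mul_nonneg (by linarith) hv0
        have hpr : p * max 0 (1 - S π i ω) = p * (t * ystar i (ω i)) := by rw [hta]
        nlinarith [humaxr, hcc, h1m, hpr]
  -- averaged lower bound from aux_core
  have hFavg : ∀ i, ∀ᵐ ω ∂Measure.pi μ,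
      (1 - 2 * Real.log 2 * min 1 (Tf i ω)) * Ustar i ω
        ≤ ((n.factorial:ℝ))⁻¹ * (∑ π : Equiv.Perm (Fin n), F π i ω) * Ustar i ω := by
    intro i
    filter_upwards [hco, hUpos i] with ω hω hU
    apply mul_le_mul_of_nonneg_right _ hU
    have key := aux_core (fun j => ystar j (ω j)) i (fun j => (hω j).1.1.1) (hω i).1.1.2
    simp only [hFdef, hTf, hS]
    exact key
  -- per-agent core inequality
  have hcore : ∀ i, ρ * ∫ ω, Ustar i ω ∂Measure.pi μ
      ≤ ((n.factorial:ℝ))⁻¹ * ∑ π : Equiv.Perm (Fin n), ∫ ω, u π i ω ∂Measure.pi μ := by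
    intro i
    have hEU0 : 0 ≤ ∫ ω, Ustar i ω ∂Measure.pi μ := integral_nonneg_of_ae (hUpos i)
    have h1 : ∀ π : Equiv.Perm (Fin n),
        ∫ ω, F π i ω * Ustar i ω ∂Measure.pi μ ≤ ∫ ω, u π i ω ∂Measure.pi μ :=
      fun π => integral_mono_ae (hint_FU π i) (hint_u π i) (hA π i)
    have h2 : ((n.factorial:ℝ))⁻¹ * ∑ π : Equiv.Perm (Fin n),
          ∫ ω, F π i ω * Ustar i ω ∂Measure.pi μ
        = ∫ ω, ((n.factorial:ℝ))⁻¹ * (∑ π : Equiv.Perm (Fin n), F π i ω) * Ustar i ω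
            ∂Measure.pi μ := by
      rw [← integral_finset_sum _ (fun π _ => hint_FU π i), ← integral_const_mul]
      congr 1
      funext ω
      rw [← Finset.sum_mul, ← mul_assoc]
    have hintW : Integrable
        (fun ω => ((n.factorial:ℝ))⁻¹ * (∑ π : Equiv.Perm (Fin n), F π i ω) * Ustar i ω)
        (Measure.pi μ) := by
      have h := (integrable_finset_sum Finset.univ (fun π _ => hint_FU π i)).const_mul
        ((n.factorial:ℝ))⁻¹
      refine h.congr (Filter.Eventually.of_forall fun ω => ?_)
      simp only
      rw [← Finset.sum_mul, ← mul_assoc]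
    have hintZ : Integrable
        (fun ω => (1 - 2 * Real.log 2 * min 1 (Tf i ω)) * Ustar i ω) (Measure.pi μ) := by
      have h := (hint_U i).sub ((hint_minTU i).const_mul (2 * Real.log 2))
      refine h.congr (Filter.Eventually.of_forall fun ω => ?_)
      simp only [Pi.sub_apply]
      ring
    have h3 : ∫ ω, (1 - 2 * Real.log 2 * min 1 (Tf i ω)) * Ustar i ω ∂Measure.pi μ
        ≤ ∫ ω, ((n.factorial:ℝ))⁻¹ * (∑ π : Equiv.Perm (Fin n), F π i ω) * Ustar i ω
            ∂Measure.pi μ :=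
      integral_mono_ae hintZ hintW (hFavg i)
    -- Fubini
    have hfubX : ∫ ω, min 1 (Tf i ω) * Ustar i ω ∂Measure.pi μ
        = (∫ ω, min 1 (Tf i ω) ∂Measure.pi μ) * ∫ ω, Ustar i ω ∂Measure.pi μ := by
      have hTsub : ∀ ω : ∀ j, Ω j, min 1 (Tf i ω)
          = min 1 (∑ j : {j : Fin n // ¬ j = i}, ystar (j : Fin n) (ω (j : Fin n))) := by
        intro ω
        congr 1
        simp only [hTf]
        exact Finset.sum_subtype _ (fun j => by simp [Finset.mem_erase]) _
      have hfub := aux_fubini μ i (G i)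
        (fun yc : ∀ j : {j : Fin n // ¬ j = i}, Ω j =>
          min 1 (∑ j : {j : Fin n // ¬ j = i}, ystar (j : Fin n) (yc j)))
      calc ∫ ω, min 1 (Tf i ω) * Ustar i ω ∂Measure.pi μ
          = ∫ ω, G i (ω i) *
              (fun yc : ∀ j : {j : Fin n // ¬ j = i}, Ω j =>
                min 1 (∑ j : {j : Fin n // ¬ j = i}, ystar (j : Fin n) (yc j)))
              (fun j => ω j) ∂Measure.pi μ := by
            congr 1
            funext ω
            simp only [hUstar]
            rw [mul_comm, hTsub ω]
        _ = (∫ ω, G i (ω i) ∂Measure.pi μ) *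
            ∫ ω, (fun yc : ∀ j : {j : Fin n // ¬ j = i}, Ω j =>
                min 1 (∑ j : {j : Fin n // ¬ j = i}, ystar (j : Fin n) (yc j)))
              (fun j => ω j) ∂Measure.pi μ := hfub
        _ = (∫ ω, min 1 (Tf i ω) ∂Measure.pi μ) * ∫ ω, Ustar i ω ∂Measure.pi μ := by
            have hGint : (∫ ω, G i (ω i) ∂Measure.pi μ) = ∫ ω, Ustar i ω ∂Measure.pi μ := by
              simp only [hUstar]
            have hHint : (∫ ω, (fun yc : ∀ j : {j : Fin n // ¬ j = i}, Ω j =>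
                min 1 (∑ j : {j : Fin n // ¬ j = i}, ystar (j : Fin n) (yc j)))
                (fun j => ω j) ∂Measure.pi μ) = ∫ ω, min 1 (Tf i ω) ∂Measure.pi μ := by
              refine integral_congr_ae (Filter.Eventually.of_forall fun ω => ?_)
              exact (hTsub ω).symm
            rw [hGint, hHint, mul_comm]
    have h4 : ∫ ω, (1 - 2 * Real.log 2 * min 1 (Tf i ω)) * Ustar i ω ∂Measure.pi μ
        = ∫ ω, Ustar i ω ∂Measure.pi μ
          - 2 * Real.log 2 * ((∫ ω, min 1 (Tf i ω) ∂Measure.pi μ)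
              * ∫ ω, Ustar i ω ∂Measure.pi μ) := by
      rw [show (fun ω => (1 - 2 * Real.log 2 * min 1 (Tf i ω)) * Ustar i ω)
          = fun ω => Ustar i ω - 2 * Real.log 2 * (min 1 (Tf i ω) * Ustar i ω) from
        funext fun ω => by ring]
      rw [integral_sub (hint_U i) ((hint_minTU i).const_mul _), integral_const_mul, hfubX]
    have h5 : ∫ ω, min 1 (Tf i ω) ∂Measure.pi μ ≤ ρ := by
      rw [← hρint]
      apply integral_mono_ae (hint_minT i) hint_minTot
      filter_upwards [hco] with ω hω
      apply min_le_min (le_refl (1:ℝ))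
      simp only [hTf, hTot]
      exact Finset.sum_le_sum_of_subset_of_nonneg (Finset.erase_subset i Finset.univ)
        (fun j _ _ => (hω j).1.1.1)
    have hid : 1 - 2 * Real.log 2 * ρ = ρ := by
      rw [hρdef]
      field_simp
      ring
    have hmin0int : 0 ≤ ∫ ω, min 1 (Tf i ω) ∂Measure.pi μ := by
      apply integral_nonneg_of_ae
      filter_upwards [hco] with ω hω
      refine le_min zero_le_one ?_
      simp only [hTf]
      exact Finset.sum_nonneg fun j _ => (hω j).1.1.1
    calc ρ * ∫ ω, Ustar i ω ∂Measure.pi μ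
        = (1 - 2 * Real.log 2 * ρ) * ∫ ω, Ustar i ω ∂Measure.pi μ := by rw [hid]
      _ = ∫ ω, Ustar i ω ∂Measure.pi μ
          - 2 * Real.log 2 * (ρ * ∫ ω, Ustar i ω ∂Measure.pi μ) := by ring
      _ ≤ ∫ ω, Ustar i ω ∂Measure.pi μ
          - 2 * Real.log 2 * ((∫ ω, min 1 (Tf i ω) ∂Measure.pi μ)
              * ∫ ω, Ustar i ω ∂Measure.pi μ) := by
          have hmm : (∫ ω, min 1 (Tf i ω) ∂Measure.pi μ) * ∫ ω, Ustar i ω ∂Measure.pi μ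
              ≤ ρ * ∫ ω, Ustar i ω ∂Measure.pi μ :=
            mul_le_mul_of_nonneg_right h5 hEU0
          have hl0 : (0:ℝ) ≤ 2 * Real.log 2 := by linarith
          have := mul_le_mul_of_nonneg_left hmm hl0
          linarith
      _ = ∫ ω, (1 - 2 * Real.log 2 * min 1 (Tf i ω)) * Ustar i ω ∂Measure.pi μ := h4.symm
      _ ≤ ∫ ω, ((n.factorial:ℝ))⁻¹ * (∑ π : Equiv.Perm (Fin n), F π i ω) * Ustar i ω
            ∂Measure.pi μ := h3
      _ = ((n.factorial:ℝ))⁻¹ * ∑ π : Equiv.Perm (Fin n),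
            ∫ ω, F π i ω * Ustar i ω ∂Measure.pi μ := h2.symm
      _ ≤ ((n.factorial:ℝ))⁻¹ * ∑ π : Equiv.Perm (Fin n),
            ∫ ω, u π i ω ∂Measure.pi μ := by
          apply mul_le_mul_of_nonneg_left (Finset.sum_le_sum fun π _ => h1 π)
          positivity
  -- decomposition of the mechanism welfare
  have hLHS : ∀ π : Equiv.Perm (Fin n),
      ∫ ω, (∑ i, v i (ω i) (y π i ω)) ∂Measure.pi μ
        = (∑ i, ∫ ω, u π i ω ∂Measure.pi μ) + p * ∑ i, ∫ ω, y π i ω ∂Measure.pi μ := by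
    intro π
    rw [integral_finset_sum _ (fun i _ => hint_vy π i), Finset.mul_sum,
      ← Finset.sum_add_distrib]
    refine Finset.sum_congr rfl fun i _ => ?_
    have hvy : (fun ω => v i (ω i) (y π i ω)) = fun ω => u π i ω + p * y π i ω :=
      funext fun ω => by rw [hu]; ring
    rw [hvy, integral_add (hint_u π i) ((hint_y π i).const_mul p), integral_const_mul]
  have hsold' : ((n.factorial:ℝ))⁻¹ * ∑ π : Equiv.Perm (Fin n),
      ∑ i, ∫ ω, y π i ω ∂Measure.pi μ = ρ := by
    rw [← hsold]
    congr 1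
    refine Finset.sum_congr rfl fun π _ => ?_
    rw [integral_finset_sum _ (fun i _ => hint_y π i)]
  have hLHS2 : (Nat.factorial n : ℝ)⁻¹ *
      ∑ π : Equiv.Perm (Fin n), ∫ ω, (∑ i, v i (ω i) (y π i ω)) ∂(Measure.pi μ)
        = ((n.factorial:ℝ))⁻¹ * (∑ π : Equiv.Perm (Fin n),
            ∑ i, ∫ ω, u π i ω ∂Measure.pi μ) + p * ρ := by
    rw [Finset.sum_congr rfl fun π _ => hLHS π, Finset.sum_add_distrib, mul_add]
    congr 1
    rw [← Finset.mul_sum, mul_left_comm, hsold']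
  have hAineq : ρ * ∑ i, ∫ ω, Ustar i ω ∂Measure.pi μ
      ≤ ((n.factorial:ℝ))⁻¹ * ∑ π : Equiv.Perm (Fin n),
          ∑ i, ∫ ω, u π i ω ∂Measure.pi μ := by
    rw [Finset.sum_comm, Finset.mul_sum, Finset.mul_sum]
    exact Finset.sum_le_sum fun i _ => hcore i
  -- bound on the optimum
  have hRHS : ∫ ω, (∑ i, v i (ω i) (x ω i)) ∂Measure.pi μ
      ≤ (∑ i, ∫ ω, Ustar i ω ∂Measure.pi μ) + p := by
    rw [integral_finset_sum _ (fun i _ => hint_vx i)]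
    have hxint : ∑ i, ∫ ω, x ω i ∂Measure.pi μ = 1 := by
      rw [← integral_finset_sum _ (fun i _ => hint_x i)]
      rw [integral_congr_ae (Filter.Eventually.of_forall hx_sum)]
      simp
    have hperi : ∀ i, ∫ ω, v i (ω i) (x ω i) ∂Measure.pi μ
        ≤ ∫ ω, (Ustar i ω + p * x ω i) ∂Measure.pi μ := by
      intro i
      apply integral_mono_ae (hint_vx i)
        ((hint_U i).add ((hint_x i).const_mul p))
      filter_upwards [hco] with ω hω
      have := (hω i).1.2 (x ω i) (hx_mem ω i)
      simp only [hUstar, hG, Pi.add_apply]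
      linarith
    calc ∑ i, ∫ ω, v i (ω i) (x ω i) ∂Measure.pi μ
        ≤ ∑ i, ∫ ω, (Ustar i ω + p * x ω i) ∂Measure.pi μ :=
          Finset.sum_le_sum fun i _ => hperi i
      _ = ∑ i, ((∫ ω, Ustar i ω ∂Measure.pi μ) + p * ∫ ω, x ω i ∂Measure.pi μ) := by
          refine Finset.sum_congr rfl fun i _ => ?_
          rw [integral_add (hint_U i) ((hint_x i).const_mul p), integral_const_mul]
      _ = (∑ i, ∫ ω, Ustar i ω ∂Measure.pi μ) + p * ∑ i, ∫ ω, x ω i ∂Measure.pi μ := by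
          rw [Finset.sum_add_distrib, Finset.mul_sum]
      _ = (∑ i, ∫ ω, Ustar i ω ∂Measure.pi μ) + p := by rw [hxint, mul_one]
  -- conclusion
  rw [ge_iff_le, hLHS2]
  calc ρ * ∫ ω, (∑ i, v i (ω i) (x ω i)) ∂Measure.pi μ
      ≤ ρ * ((∑ i, ∫ ω, Ustar i ω ∂Measure.pi μ) + p) :=
        mul_le_mul_of_nonneg_left hRHS hρ0
    _ = ρ * ∑ i, ∫ ω, Ustar i ω ∂Measure.pi μ + p * ρ := by ring
    _ ≤ ((n.factorial:ℝ))⁻¹ * (∑ π : Equiv.Perm (Fin n),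
          ∑ i, ∫ ω, u π i ω ∂Measure.pi μ) + p * ρ := by linarith [hAineq]
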